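/- arXiv:2312.01471 — 8 statements merged into one kernel-verified Lean document; each statement's English description precedes it below -/
import Mathlib

section
/- Suppose W(y) < 0 for all y ≠ y*, and suppose the weight function τ satisfies τ(y) ≥ τ_L(y) for all y ≠ y*. Then for every step-size value h > 0 and every point y ≠ y*, the NSFD update strictly decreases the quadratic Lyapunov function: V(Φ(y)) < V(y). -/
/-- NSFD update strictly decreases the quadratic Lyapunov function
`V(y) = ∑ i, α i * (y i - y* i)^2` for every step size `h > 0` and every
`y ≠ y*`, provided `W(y) < 0` off the equilibrium and the weight `τ`
dominates `τ_L(y) = -(∑ i, α i * (f i y)^2) / W(y)`. -/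
theorem nsfd_preserves_quadratic_lyapunov
    (n : ℕ) (hn : 1 ≤ n)
    (f : (Fin n → ℝ) → (Fin n → ℝ)) (ystar : Fin n → ℝ)
    (α : Fin n → ℝ) (hα : ∀ i, 0 < α i)
    (τ : (Fin n → ℝ) → ℝ) (hτ0 : ∀ y, 0 ≤ τ y)
    (hW : ∀ y, y ≠ ystar → 2 * ∑ i, α i * (y i - ystar i) * f y i < 0)
    (hτL : ∀ y, y ≠ ystar →
      τ y ≥ -(∑ i, α i * (f y i) ^ 2) / (2 * ∑ i, α i * (y i - ystar i) * f y i))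
    (h : ℝ) (hh : 0 < h)
    (y : Fin n → ℝ) (hy : y ≠ ystar) :
    ∑ i, α i * ((y i + h * f y i / (1 + h * τ y)) - ystar i) ^ 2 <
      ∑ i, α i * (y i - ystar i) ^ 2 := by
  set A := ∑ i, α i * (y i - ystar i) * f y i with hA
  set S := ∑ i, α i * (f y i) ^ 2 with hS
  have hWlt : 2 * A < 0 := hW y hy
  have hSnn : 0 ≤ S := Finset.sum_nonneg fun i _ => mul_nonneg (le_of_lt (hα i)) (sq_nonneg _)
  have hτ : τ y * (2 * A) ≤ -S := by
    have := hτL y hy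
    exact (div_le_iff_of_neg hWlt).mp this
  have hd : (0:ℝ) < 1 + h * τ y := by
    have := hτ0 y
    nlinarith
  set d := 1 + h * τ y with hdd
  set c := h / d with hc
  have hcd : c * d = h := div_mul_cancel₀ h (ne_of_gt hd)
  have hcpos : 0 < c := div_pos hh hd
  have key : ∑ i, α i * ((y i + h * f y i / d) - ystar i) ^ 2
      = (∑ i, α i * (y i - ystar i) ^ 2) + (c * (2 * A) + c ^ 2 * S) := by
    have : ∀ i : Fin n, α i * ((y i + h * f y i / d) - ystar i) ^ 2
        = α i * (y i - ystar i) ^ 2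
          + (c * (2 * (α i * (y i - ystar i) * f y i)) + c ^ 2 * (α i * (f y i) ^ 2)) := by
      intro i
      have hdne : d ≠ 0 := ne_of_gt hd
      rw [hc]
      field_simp [hc]
      ring
    rw [Finset.sum_congr rfl fun i _ => this i, Finset.sum_add_distrib,
      Finset.sum_add_distrib, ← Finset.mul_sum, ← Finset.mul_sum, ← Finset.mul_sum]
  rw [key]
  have hneg : c * (2 * A) + c ^ 2 * S < 0 := by
    have h1 : c ^ 2 * S ≤ c ^ 2 * (-(τ y * (2 * A))) := by
      nlinarith [sq_nonneg c]
    have h2 : c * τ y < 1 := by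
      rw [hc, div_mul_eq_mul_div, div_lt_one hd, hdd]
      nlinarith [hτ0 y]
    nlinarith [mul_pos hcpos (neg_pos.mpr hWlt)]
  linarith
end

section
/- Suppose f(y*) = 0, W(y) < 0 for all y ≠ y*, and τ(y) ≥ τ_L(y) for all y ≠ y*. Let h > 0 and let (y^k) be the sequence defined by an arbitrary initial point y^0 and y^{k+1} = Φ(y^k). Then the sequence V(y^k) is nonincreasing in k, and V(y^{k+1}) < V(y^k) whenever y^k ≠ y*. -/
/-- Along the NSFD iteration `y^{k+1} = Φ(y^k)`, the quadratic Lyapunov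
function `V(y) = ∑ i, α i * (y i - y* i)^2` is nonincreasing, and strictly
decreasing whenever `y^k ≠ y*`. -/
theorem nsfd_lyapunov_sequence_monotone
    (n : ℕ) (hn : 1 ≤ n)
    (f : (Fin n → ℝ) → (Fin n → ℝ)) (ystar : Fin n → ℝ)
    (α : Fin n → ℝ) (hα : ∀ i, 0 < α i)
    (τ : (Fin n → ℝ) → ℝ) (hτ0 : ∀ y, 0 ≤ τ y)
    (hfstar : f ystar = 0)
    (hW : ∀ y, y ≠ ystar → 2 * ∑ i, α i * (y i - ystar i) * f y i < 0)
    (hτL : ∀ y, y ≠ ystar →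
      τ y ≥ -(∑ i, α i * (f y i) ^ 2) / (2 * ∑ i, α i * (y i - ystar i) * f y i))
    (h : ℝ) (hh : 0 < h)
    (Y : ℕ → (Fin n → ℝ))
    (hY : ∀ k, ∀ i, Y (k + 1) i = Y k i + h * f (Y k) i / (1 + h * τ (Y k))) :
    (∀ k, ∑ i, α i * (Y (k + 1) i - ystar i) ^ 2 ≤
        ∑ i, α i * (Y k i - ystar i) ^ 2) ∧
    (∀ k, Y k ≠ ystar → ∑ i, α i * (Y (k + 1) i - ystar i) ^ 2 <
        ∑ i, α i * (Y k i - ystar i) ^ 2) := by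
  have key : ∀ k, Y k ≠ ystar →
      ∑ i, α i * (Y (k + 1) i - ystar i) ^ 2 <
        ∑ i, α i * (Y k i - ystar i) ^ 2 := by
    intro k hk
    set y := Y k with hy
    set W := 2 * ∑ i, α i * (y i - ystar i) * f y i with hWdef
    set S := ∑ i, α i * (f y i) ^ 2 with hSdef
    have hWneg : W < 0 := hW y hk
    have hSnn : 0 ≤ S :=
      Finset.sum_nonneg fun i _ => mul_nonneg (hα i).le (sq_nonneg _)
    have hD : 0 < 1 + h * τ y := by
      have := mul_nonneg hh.le (hτ0 y); linarith
    set D := 1 + h * τ y with hDdef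
    have hτW : τ y * W ≤ -S := by
      have h1 := hτL y hk
      rw [ge_iff_le, div_le_iff_of_neg hWneg] at h1
      linarith
    have hsum : ∑ i, α i * (Y (k + 1) i - ystar i) ^ 2 =
        (∑ i, α i * (y i - ystar i) ^ 2) + (h / D) * W + (h / D) ^ 2 * S := by
      have hterm : ∀ i, α i * (Y (k + 1) i - ystar i) ^ 2 =
          α i * (y i - ystar i) ^ 2
            + (h / D) * (2 * (α i * (y i - ystar i) * f y i))
            + (h / D) ^ 2 * (α i * (f y i) ^ 2) := by
        intro i
        rw [hY k i, ← hy, ← hDdef]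
        field_simp
        ring
      rw [Finset.sum_congr rfl fun i _ => hterm i]
      rw [Finset.sum_add_distrib, Finset.sum_add_distrib, ← Finset.mul_sum,
        ← Finset.mul_sum, ← Finset.mul_sum]
    have hfrac : W * D + h * S < 0 := by
      have hk2 : h * (τ y * W + S) ≤ 0 :=
        mul_nonpos_of_nonneg_of_nonpos hh.le (by linarith)
      have hEq : W * D + h * S = W + h * (τ y * W + S) := by
        rw [hDdef]; ring
      linarith [hEq ▸ (by linarith : W + h * (τ y * W + S) < 0)]
    have hfin : (h / D) * W + (h / D) ^ 2 * S < 0 := by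
      have heq : (h / D) * W + (h / D) ^ 2 * S = (h / D ^ 2) * (W * D + h * S) := by
        field_simp
      rw [heq]
      exact mul_neg_of_pos_of_neg (by positivity) hfrac
    rw [hsum]
    linarith
  refine ⟨fun k => ?_, key⟩
  by_cases hc : Y k = ystar
  · have hfix : Y (k + 1) = Y k := by
      funext i
      rw [hY k i, hc, hfstar]
      simp
    rw [hfix]
  · exact (key k hc).le
end

section
/- For every point y, every h > 0, and every weight function τ with 1 + h * τ(y) > 0, the variation of the quadratic Lyapunov function under one NSFD update satisfies the identity V(Φ(y)) − V(y) = (h / (1 + h * τ(y))) * ( W(y) + (h / (1 + h * τ(y))) * ∑ i, α i * (f i (y))^2 ). -/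
/-- Exact identity for the variation of the quadratic Lyapunov function
under one NSFD update. -/
theorem nsfd_lyapunov_variation_identity
    (n : ℕ) (hn : 1 ≤ n)
    (f : (Fin n → ℝ) → (Fin n → ℝ)) (ystar : Fin n → ℝ)
    (α : Fin n → ℝ) (hα : ∀ i, 0 < α i)
    (τ : (Fin n → ℝ) → ℝ)
    (h : ℝ) (hh : 0 < h)
    (y : Fin n → ℝ) (hden : 0 < 1 + h * τ y) :
    (∑ i, α i * ((y i + h * f y i / (1 + h * τ y)) - ystar i) ^ 2) -
      ∑ i, α i * (y i - ystar i) ^ 2 =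
    (h / (1 + h * τ y)) *
      ((2 * ∑ i, α i * (y i - ystar i) * f y i) +
        (h / (1 + h * τ y)) * ∑ i, α i * (f y i) ^ 2) := by
  have hd : (1 + h * τ y) ≠ 0 := hden.ne'
  simp only [mul_add, Finset.mul_sum, ← Finset.sum_sub_distrib, ← Finset.sum_add_distrib]
  refine Finset.sum_congr rfl fun i _ => ?_
  field_simp
  ring
end

section
/- For every point y, every h > 0, and every weight function τ with 1 + h * τ(y) > 0, one has V(Φ(y)) − V(y) < 0 if and only if W(y) + (h / (1 + h * τ(y))) * ∑ i, α i * (f i (y))^2 < 0. -/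
/-- The variation of the quadratic Lyapunov function under one NSFD update
is negative iff `W(y) + (h/(1+hτ(y))) * ∑ i, α i * (f i y)^2 < 0`. -/
theorem nsfd_lyapunov_decrease_iff
    (n : ℕ) (hn : 1 ≤ n)
    (f : (Fin n → ℝ) → (Fin n → ℝ)) (ystar : Fin n → ℝ)
    (α : Fin n → ℝ) (hα : ∀ i, 0 < α i)
    (τ : (Fin n → ℝ) → ℝ)
    (h : ℝ) (hh : 0 < h)
    (y : Fin n → ℝ) (hden : 0 < 1 + h * τ y) :
    ((∑ i, α i * ((y i + h * f y i / (1 + h * τ y)) - ystar i) ^ 2) -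
        (∑ i, α i * (y i - ystar i) ^ 2) < 0) ↔
      (2 * ∑ i, α i * (y i - ystar i) * f y i) +
        (h / (1 + h * τ y)) * ∑ i, α i * (f y i) ^ 2 < 0 := by
  set c : ℝ := h / (1 + h * τ y) with hc
  have hcpos : 0 < c := div_pos hh hden
  have key : (∑ i, α i * ((y i + h * f y i / (1 + h * τ y)) - ystar i) ^ 2) -
      (∑ i, α i * (y i - ystar i) ^ 2)
      = c * ((2 * ∑ i, α i * (y i - ystar i) * f y i) +
        c * ∑ i, α i * (f y i) ^ 2) := by
    have : ∀ i, h * f y i / (1 + h * τ y) = c * f y i := by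
      intro i; rw [hc]; ring
    simp_rw [this, Finset.mul_sum, ← Finset.sum_sub_distrib, ← Finset.sum_add_distrib]
    rw [Finset.mul_sum]
    apply Finset.sum_congr rfl
    intro i _; ring
  rw [key]
  constructor
  · intro h1
    by_contra h2
    push_neg at h2
    nlinarith
  · intro h1
    have := mul_neg_of_pos_of_neg hcpos h1
    linarith
end

section
/- Suppose f satisfies the positivity condition and the weight function τ satisfies τ(y) ≥ 0 and τ(y) ≥ τ_i*(y) for every index i and every y in the nonnegative orthant. Then for every h > 0 and every point y with y i ≥ 0 for all i, the NSFD update satisfies Φ(y) i ≥ 0 for all i. -/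
/-- If `f` satisfies the positivity condition and the weight `τ` is
nonnegative and dominates each `τ_i*` on the nonnegative orthant, then the
NSFD update maps the nonnegative orthant into itself for every `h > 0`. -/
theorem nsfd_preserves_positivity_one_step
    (n : ℕ) (hn : 1 ≤ n)
    (f : (Fin n → ℝ) → (Fin n → ℝ))
    (hpos : ∀ i : Fin n, ∀ y : Fin n → ℝ,
      (∀ j, 0 ≤ y j) → y i = 0 → 0 ≤ f y i)
    (τ : (Fin n → ℝ) → ℝ)
    (hτ0 : ∀ y : Fin n → ℝ, (∀ j, 0 ≤ y j) → 0 ≤ τ y)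
    (hτstar : ∀ y : Fin n → ℝ, (∀ j, 0 ≤ y j) → ∀ i : Fin n,
      τ y ≥ (if 0 ≤ f y i then 0 else -(f y i) / y i))
    (h : ℝ) (hh : 0 < h)
    (y : Fin n → ℝ) (hy : ∀ i, 0 ≤ y i) :
    ∀ i, 0 ≤ y i + h * f y i / (1 + h * τ y) := by
  intro i
  have hτ := hτ0 y hy
  have hden : 0 < 1 + h * τ y := by positivity
  have key : y i + h * f y i / (1 + h * τ y)
      = (y i * (1 + h * τ y) + h * f y i) / (1 + h * τ y) := by
    field_simp
  rw [key, le_div_iff₀ hden]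
  · by_cases hf : 0 ≤ f y i
    · nlinarith [hy i]
    · push_neg at hf
      have hyi : 0 < y i := by
        rcases (hy i).lt_or_eq with h0 | h0
        · exact h0
        · exact absurd (hpos i y hy h0.symm) (not_le.mpr hf)
      have hst := hτstar y hy i
      rw [if_neg (not_le.mpr hf), ge_iff_le, div_le_iff₀ hyi] at hst
      nlinarith
end

section
/- Suppose f satisfies the positivity condition and the weight function τ satisfies τ(y) ≥ 0 and τ(y) ≥ τ_i*(y) for every index i and every y in the nonnegative orthant. Let h > 0 and let (y^k) be the sequence defined by y^{k+1} = Φ(y^k) from an initial point y^0 with y^0 i ≥ 0 for all i. Then y^k i ≥ 0 for all i and all k ≥ 0, i.e., the NSFD model admits the nonnegative orthant as a positively invariant set for every value of the step size. -/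
/-- The NSFD model admits the nonnegative orthant as a positively invariant
set for every value of the step size: any NSFD trajectory starting in the
nonnegative orthant stays in it. -/
theorem nsfd_positively_invariant
    (n : ℕ) (hn : 1 ≤ n)
    (f : (Fin n → ℝ) → (Fin n → ℝ))
    (hpos : ∀ i : Fin n, ∀ y : Fin n → ℝ,
      (∀ j, 0 ≤ y j) → y i = 0 → 0 ≤ f y i)
    (τ : (Fin n → ℝ) → ℝ)
    (hτ0 : ∀ y : Fin n → ℝ, (∀ j, 0 ≤ y j) → 0 ≤ τ y)
    (hτstar : ∀ y : Fin n → ℝ, (∀ j, 0 ≤ y j) → ∀ i : Fin n,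
      τ y ≥ (if 0 ≤ f y i then 0 else -(f y i) / y i))
    (h : ℝ) (hh : 0 < h)
    (Y : ℕ → (Fin n → ℝ))
    (hY : ∀ k, ∀ i, Y (k + 1) i = Y k i + h * f (Y k) i / (1 + h * τ (Y k)))
    (hY0 : ∀ i, 0 ≤ Y 0 i) :
    ∀ k, ∀ i, 0 ≤ Y k i := by
  intro k
  induction k with
  | zero => exact hY0
  | succ k ih =>
    intro i
    rw [hY k i]
    set y := Y k
    have hden : 0 < 1 + h * τ y :=
      by nlinarith [hτ0 y ih, hh.le]
    by_cases hf : 0 ≤ f y i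
    · have : 0 ≤ h * f y i / (1 + h * τ y) :=
        div_nonneg (by positivity) hden.le
      linarith [ih i]
    · push_neg at hf
      have hτs := hτstar y ih i
      rw [if_neg (not_le.mpr hf)] at hτs
      rcases eq_or_lt_of_le (ih i) with hyi | hyi
      · exact absurd (hpos i y ih hyi.symm) (not_le.mpr hf)
      · -- y i > 0, τ y ≥ -f/y i
        have h1 : (-(f y i)) / y i * y i = -(f y i) := div_mul_cancel₀ _ hyi.ne'
        have h2 : 1 + h * τ y ≥ h * (-(f y i)) / y i := by
          rw [mul_div_assoc]
          nlinarith
        have h3 : h * -f y i ≤ (1 + h * τ y) * y i := (div_le_iff₀ hyi).mp h2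
        have h5 : -(h * f y i / (1 + h * τ y)) ≤ y i := by
          rw [← neg_div, div_le_iff₀ hden]
          linarith
        linarith
end

section
/- Suppose f satisfies the positivity condition, W(y) < 0 for all y ≠ y*, and the weight function τ satisfies τ(y) ≥ 0 for all y, τ(y) ≥ τ_L(y) for all y ≠ y*, and τ(y) ≥ τ_i*(y) for every index i and every y in the nonnegative orthant. Then for every h > 0 and every point y in the nonnegative orthant with y ≠ y*, the NSFD update Φ(y) lies in the nonnegative orthant and V(Φ(y)) < V(y); that is, the NSFD method simultaneously preserves the quadratic Lyapunov function and the positivity of solutions for all step sizes. -/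
/-- Simultaneous preservation: under the positivity condition and the
Lyapunov-decrease condition `W(y) < 0` off the equilibrium, a weight `τ`
that is nonnegative, dominates `τ_L` off the equilibrium and dominates each
`τ_i*` on the nonnegative orthant gives an NSFD method that keeps the
nonnegative orthant invariant and strictly decreases the quadratic Lyapunov
function, for every step size. -/
theorem nsfd_preserves_lyapunov_and_positivity
    (n : ℕ) (hn : 1 ≤ n)
    (f : (Fin n → ℝ) → (Fin n → ℝ)) (ystar : Fin n → ℝ)
    (α : Fin n → ℝ) (hα : ∀ i, 0 < α i)
    (hpos : ∀ i : Fin n, ∀ y : Fin n → ℝ,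
      (∀ j, 0 ≤ y j) → y i = 0 → 0 ≤ f y i)
    (hW : ∀ y, y ≠ ystar → 2 * ∑ i, α i * (y i - ystar i) * f y i < 0)
    (τ : (Fin n → ℝ) → ℝ)
    (hτ0 : ∀ y, 0 ≤ τ y)
    (hτL : ∀ y, y ≠ ystar →
      τ y ≥ -(∑ i, α i * (f y i) ^ 2) / (2 * ∑ i, α i * (y i - ystar i) * f y i))
    (hτstar : ∀ y : Fin n → ℝ, (∀ j, 0 ≤ y j) → ∀ i : Fin n,
      τ y ≥ (if 0 ≤ f y i then 0 else -(f y i) / y i))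
    (h : ℝ) (hh : 0 < h)
    (y : Fin n → ℝ) (hy : ∀ i, 0 ≤ y i) (hyne : y ≠ ystar) :
    (∀ i, 0 ≤ y i + h * f y i / (1 + h * τ y)) ∧
      ∑ i, α i * ((y i + h * f y i / (1 + h * τ y)) - ystar i) ^ 2 <
        ∑ i, α i * (y i - ystar i) ^ 2 := by
  set W : ℝ := 2 * ∑ i, α i * (y i - ystar i) * f y i with hWdef
  set S : ℝ := ∑ i, α i * (f y i) ^ 2 with hSdef
  have hWneg : W < 0 := hW y hyne
  have hD : (0:ℝ) < 1 + h * τ y := by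
    have := mul_nonneg hh.le (hτ0 y); linarith
  set d : ℝ := h / (1 + h * τ y) with hddef
  have hd : 0 < d := div_pos hh hD
  have hdf : ∀ i, h * f y i / (1 + h * τ y) = d * f y i := by
    intro i; rw [hddef]; ring
  constructor
  · intro i
    by_cases hf : 0 ≤ f y i
    · have : 0 ≤ h * f y i / (1 + h * τ y) :=
        div_nonneg (mul_nonneg hh.le hf) hD.le
      linarith [hy i]
    · push_neg at hf
      have hyi : 0 < y i := by
        rcases lt_or_eq_of_le (hy i) with hlt | heq
        · exact hlt
        · exact absurd (hpos i y hy heq.symm) (not_le.mpr hf)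
      have hτi := hτstar y hy i
      rw [if_neg (not_le.mpr hf)] at hτi
      have h2 : -(f y i) ≤ τ y * y i := by
        rw [ge_iff_le, div_le_iff₀ hyi] at hτi; linarith
      have key : 0 ≤ y i * (1 + h * τ y) + h * f y i := by nlinarith
      have heq : y i + h * f y i / (1 + h * τ y)
          = (y i * (1 + h * τ y) + h * f y i) / (1 + h * τ y) := by
        field_simp
      rw [heq]
      exact div_nonneg key hD.le
  · have hS : τ y * W ≤ -S := by
      have := hτL y hyne
      rw [ge_iff_le, div_le_iff_of_neg hWneg] at this
      linarith
    have hWdS : W + d * S < 0 := by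
      have heq : W + d * S = ((1 + h * τ y) * W + h * S) / (1 + h * τ y) := by
        rw [hddef]; field_simp
      rw [heq]
      apply div_neg_of_neg_of_pos _ hD
      nlinarith
    simp only [hdf]
    have expand : ∑ i, α i * ((y i + d * f y i) - ystar i) ^ 2
        = ∑ i, (α i * (y i - ystar i) ^ 2
            + d * 2 * (α i * (y i - ystar i) * f y i)
            + d * d * (α i * (f y i) ^ 2)) :=
      Finset.sum_congr rfl (fun i _ => by ring)
    rw [expand, Finset.sum_add_distrib, Finset.sum_add_distrib,
      ← Finset.mul_sum, ← Finset.mul_sum]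
    have hdW : d * 2 * ∑ i, α i * (y i - ystar i) * f y i = d * W := by
      rw [hWdef]; ring
    rw [hdW, ← hSdef]
    nlinarith [mul_neg_of_pos_of_neg hd hWdS]
end

section
/- Let A, B, C, D > 0, α₂ > 0, α₁ = (C/B)*α₂, and set f₁(y₁,y₂) = −A*y₁^3 + B*y₂, f₂(y₁,y₂) = −C*y₁ − D*y₂^3, τ_L(y₁,y₂) = (α₁*(f₁(y₁,y₂))^2 + α₂*(f₂(y₁,y₂))^2) / (2*A*α₁*y₁^4 + 2*D*α₂*y₂^4) for (y₁,y₂) ≠ (0,0), and τ(y₁,y₂) = τ_L(y₁,y₂) + 0.001. Then for every h > 0 and every (y₁,y₂) ≠ (0,0), the NSFD update (z₁,z₂) with z_i = y_i + h*f_i(y₁,y₂)/(1 + h*τ(y₁,y₂)) satisfies α₁*z₁^2 + α₂*z₂^2 < α₁*y₁^2 + α₂*y₂^2. -/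
set_option maxHeartbeats 1000000


/-- For the planar test system with weight `τ = τ_L + 0.001`, the NSFD
update strictly decreases the quadratic Lyapunov function
`V = α₁ y₁² + α₂ y₂²` for every step size `h > 0` and `(y₁, y₂) ≠ (0, 0)`. -/
theorem planar_nsfd_lyapunov_decrease
    (A B C D : ℝ) (hA : 0 < A) (hB : 0 < B) (hC : 0 < C) (hD : 0 < D)
    (α₁ α₂ : ℝ) (hα₂ : 0 < α₂) (hα₁ : α₁ = (C / B) * α₂)
    (h : ℝ) (hh : 0 < h)
    (y₁ y₂ : ℝ) (hy : (y₁, y₂) ≠ (0, 0)) :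
    α₁ * (y₁ + h * (-A * y₁ ^ 3 + B * y₂) /
        (1 + h * ((α₁ * (-A * y₁ ^ 3 + B * y₂) ^ 2 +
            α₂ * (-C * y₁ - D * y₂ ^ 3) ^ 2) /
          (2 * A * α₁ * y₁ ^ 4 + 2 * D * α₂ * y₂ ^ 4) + 0.001))) ^ 2 +
      α₂ * (y₂ + h * (-C * y₁ - D * y₂ ^ 3) /
        (1 + h * ((α₁ * (-A * y₁ ^ 3 + B * y₂) ^ 2 +
            α₂ * (-C * y₁ - D * y₂ ^ 3) ^ 2) /
          (2 * A * α₁ * y₁ ^ 4 + 2 * D * α₂ * y₂ ^ 4) + 0.001))) ^ 2 <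
    α₁ * y₁ ^ 2 + α₂ * y₂ ^ 2 := by
  have hα₁p : 0 < α₁ := by rw [hα₁]; positivity
  set F1 : ℝ := -A * y₁ ^ 3 + B * y₂ with hF1
  set F2 : ℝ := -C * y₁ - D * y₂ ^ 3 with hF2
  set W : ℝ := 2 * A * α₁ * y₁ ^ 4 + 2 * D * α₂ * y₂ ^ 4 with hWdef
  set S : ℝ := α₁ * F1 ^ 2 + α₂ * F2 ^ 2 with hSdef
  clear_value F1 F2 W S
  have hy' : y₁ ≠ 0 ∨ y₂ ≠ 0 := by
    by_contra hcon
    push_neg at hcon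
    exact hy (by simp [hcon.1, hcon.2])
  have hW : 0 < W := by
    rw [hWdef]
    rcases hy' with h1 | h2
    · have h4 : 0 < y₁ ^ 4 := by positivity
      have h4' : 0 ≤ y₂ ^ 4 := by positivity
      nlinarith [mul_pos hD hα₂, mul_pos (mul_pos hA hα₁p) h4]
    · have h4 : 0 < y₂ ^ 4 := by positivity
      have h4' : 0 ≤ y₁ ^ 4 := by positivity
      nlinarith [mul_pos hA hα₁p, mul_pos (mul_pos hD hα₂) h4]
  have hS : 0 ≤ S := by rw [hSdef]; positivity
  set d : ℝ := 1 + h * (S / W + 0.001) with hddef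
  clear_value d
  have hSW : 0 ≤ S / W := div_nonneg hS hW.le
  have hd : 0 < d := by
    rw [hddef]
    have h001 : (0:ℝ) < 0.001 := by norm_num
    nlinarith
  have hBC : α₁ * B = C * α₂ := by
    rw [hα₁]; field_simp
  have hcross : α₁ * y₁ * F1 + α₂ * y₂ * F2 = -(W / 2) := by
    rw [hF1, hF2, hWdef]
    linear_combination y₁ * y₂ * hBC
  have expand : α₁ * (y₁ + h * F1 / d) ^ 2 + α₂ * (y₂ + h * F2 / d) ^ 2
      = α₁ * y₁ ^ 2 + α₂ * y₂ ^ 2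
        + 2 * (h / d) * (α₁ * y₁ * F1 + α₂ * y₂ * F2) + (h / d) ^ 2 * S := by
    rw [hSdef]; ring
  rw [expand, hcross]
  have hdW : d * W = W + h * S + 0.001 * (h * W) := by
    rw [hddef]
    field_simp
    ring
  have hq : 0 < h / d := div_pos hh hd
  have hqS : (h / d) * S < W := by
    rw [div_mul_eq_mul_div, div_lt_iff₀ hd]
    nlinarith [mul_pos hh hW]
  have hfin : (h / d) ^ 2 * S < (h / d) * W := by
    have := mul_lt_mul_of_pos_left hqS hq
    nlinarith
  nlinarith
end
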